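/- Let 0 ≤ a < b ≤ 1 and let ρ : [a,b] → ℝ be continuously differentiable with 0 ≤ ρ(ξ) < 1/2 for all ξ ∈ [a,b] and satisfying the reduced ODE (1 − 2ρ(ξ)) ρ'(ξ) = −g(ξ) ρ(ξ)(1 − ρ(ξ)) on [a,b]. Then, with c := k(a) ρ(a)(1 − ρ(a)), one has 4c ≤ k(ξ) and ρ(ξ) = (1/2)(1 − √(1 − 4c/k(ξ))) for every ξ ∈ [a,b]; i.e., orbits of the reduced problem below the fold line are exactly the level lines of H(ξ,ρ) = k(ξ) ρ (1 − ρ). -/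

import Mathlib

open Set

/-- A continuously differentiable solution of the reduced ODE staying strictly
below the fold line `ρ = 1/2` on `[a,b] ⊆ [0,1]` is exactly the lower branch of the level
line of `H(ξ,ρ) = k(ξ)ρ(1-ρ)` through its initial point: with `c = k(a)ρ(a)(1-ρ(a))` one has
`4c ≤ k(ξ)` and `ρ(ξ) = (1/2)(1 - √(1 - 4c/k(ξ)))` on `[a,b]`. -/
theorem reduced_ode_level_line_below_fold
    (k : ℝ → ℝ) (ξs : ℝ)
    (hk : ContDiff ℝ 2 k)
    (hkpos : ∀ x ∈ Icc (0:ℝ) 1, 0 < k x)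
    (hξs : ξs ∈ Ioo (0:ℝ) 1)
    (hmin : ∀ x ∈ Icc (0:ℝ) 1, x ≠ ξs → k ξs < k x)
    (hk's : deriv k ξs = 0)
    (hk''s : 0 < deriv (deriv k) ξs)
    (a b : ℝ) (ha : 0 ≤ a) (hab : a < b) (hb : b ≤ 1)
    (ρ ρ' : ℝ → ℝ)
    (hρ : ∀ ξ ∈ Icc a b, HasDerivWithinAt ρ (ρ' ξ) (Icc a b) ξ)
    (hρ'cont : ContinuousOn ρ' (Icc a b))
    (hrange : ∀ ξ ∈ Icc a b, 0 ≤ ρ ξ ∧ ρ ξ < 1/2)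
    (hode : ∀ ξ ∈ Icc a b,
      (1 - 2 * ρ ξ) * ρ' ξ = -(deriv k ξ / k ξ) * ρ ξ * (1 - ρ ξ)) :
    ∀ ξ ∈ Icc a b,
      4 * (k a * (ρ a * (1 - ρ a))) ≤ k ξ ∧
      ρ ξ = 1/2 * (1 - Real.sqrt (1 - 4 * (k a * (ρ a * (1 - ρ a))) / k ξ)) := by

  have hsub : Icc a b ⊆ Icc (0:ℝ) 1 := Icc_subset_Icc ha hb
  have hkne : ∀ ξ ∈ Icc a b, k ξ ≠ 0 := fun ξ hξ => (hkpos ξ (hsub hξ)).ne'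
  set H : ℝ → ℝ := fun ξ => k ξ * (ρ ξ * (1 - ρ ξ)) with hHdef
  have hHderiv : ∀ ξ ∈ Icc a b, HasDerivWithinAt H 0 (Icc a b) ξ := by
    intro ξ hξ
    have hkd : HasDerivWithinAt k (deriv k ξ) (Icc a b) ξ :=
      ((hk.differentiable (by norm_num)) ξ).hasDerivAt.hasDerivWithinAt
    have hρd := hρ ξ hξ
    have h1 : HasDerivWithinAt (fun t => ρ t * (1 - ρ t))
        (ρ' ξ * (1 - ρ ξ) + ρ ξ * (0 - ρ' ξ)) (Icc a b) ξ :=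
      hρd.mul ((hasDerivWithinAt_const _ _ 1).sub hρd)
    have h2 := hkd.mul h1
    convert h2 using 1
    any_goals rfl
    have hode' := hode ξ hξ
    have hk0 := hkne ξ hξ
    field_simp at hode'
    nlinarith [hode']
  have hHcont : ContinuousOn H (Icc a b) := by
    intro x hx
    exact (hHderiv x hx).continuousWithinAt
  have hconst : ∀ ξ ∈ Icc a b, H ξ = H a := by
    apply constant_of_has_deriv_right_zero hHcont
    intro x hx
    exact (hHderiv x (Ico_subset_Icc_self hx)).mono_of_mem_nhdsWithin
      (Icc_mem_nhdsGE_of_mem ⟨hx.1, hx.2⟩)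
  intro ξ hξ
  have hc : k ξ * (ρ ξ * (1 - ρ ξ)) = k a * (ρ a * (1 - ρ a)) := hconst ξ hξ
  have hK := hkpos ξ (hsub hξ)
  obtain ⟨hr0, hr1⟩ := hrange ξ hξ
  constructor
  · nlinarith [sq_nonneg (1 - 2 * ρ ξ)]
  · have hs : (1 : ℝ) - 4 * (k a * (ρ a * (1 - ρ a))) / k ξ = (1 - 2 * ρ ξ)^2 := by
      rw [← hc]
      field_simp
      ring
    rw [hs, Real.sqrt_sq (by linarith)]
    ring
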